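/- Let K be a field, Λ a finite-dimensional K-algebra, and let U and U' be nonzero finite-dimensional uniserial left Λ-modules with dim_K U = dim_K U', such that U is not isomorphic to U' and the quotients U/soc(U) and U'/soc(U') are isomorphic. Then dim_K Hom_Λ(U', U) = dim_K Hom_Λ(U/soc(U), U) and consequently dim_K Hom_Λ(U', U) < dim_K Hom_Λ(U, U). -/

import Mathlib

/-- A module is uniserial if its submodules are totally ordered by inclusion. -/
def IsUniserialModule (Λ M : Type*) [Ring Λ] [AddCommGroup M] [Module Λ M] : Prop :=
  ∀ N N' : Submodule Λ M, N ≤ N' ∨ N' ≤ N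

/-- The socle of a module: the sum of all its simple submodules. -/
def Module.socle (Λ M : Type*) [Ring Λ] [AddCommGroup M] [Module Λ M] : Submodule Λ M :=
  sSup {N : Submodule Λ M | IsSimpleModule Λ ↥N}

theorem socle_le_of_ne_bot {Λ M : Type*} [Ring Λ] [AddCommGroup M] [Module Λ M]
    (hM : IsUniserialModule Λ M) {N : Submodule Λ M} (hN : N ≠ ⊥) :
    Module.socle Λ M ≤ N := by
  refine sSup_le fun S hS => ?_
  have hatom : IsAtom S := isSimpleModule_iff_isAtom.1 hS
  rcases hM S N with h | h
  · exact h
  · rcases lt_or_eq_of_le h with h' | h'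
    · exact absurd (hatom.2 N h') hN
    · exact h'.ge

theorem socle_ne_bot (K Λ M : Type*) [Field K] [Ring Λ] [Algebra K Λ]
    [AddCommGroup M] [Module K M] [Module Λ M] [IsScalarTower K Λ M]
    [FiniteDimensional K M] [Nontrivial M] : Module.socle Λ M ≠ ⊥ := by
  haveI : IsArtinian Λ M := isArtinian_of_tower K inferInstance
  haveI : IsAtomic (Submodule Λ M) := isAtomic_of_orderBot_wellFounded_lt wellFounded_lt
  rcases IsAtomic.eq_bot_or_exists_atom_le (⊤ : Submodule Λ M) with h | ⟨a, ha, _⟩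
  · exact absurd h top_ne_bot
  · have hle : a ≤ Module.socle Λ M := le_sSup (isSimpleModule_iff_isAtom.2 ha)
    exact fun hbot => ha.1 (le_bot_iff.1 (hbot ▸ hle))

/-- Let `U` and `U'` be nonzero finite-dimensional uniserial left
`Λ`-modules of the same `K`-dimension, with `U` not isomorphic to `U'` and
`U/soc U ≅ U'/soc U'`.  Then `dim_K Hom_Λ(U', U) = dim_K Hom_Λ(U/soc U, U)` and
consequently `dim_K Hom_Λ(U', U) < dim_K Hom_Λ(U, U)`. -/
theorem hom_dim_eq_and_lt_of_quotients_iso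
    (K Λ : Type*) [Field K] [Ring Λ] [Algebra K Λ] [FiniteDimensional K Λ]
    (U : Type*) [AddCommGroup U] [Module K U] [Module Λ U] [IsScalarTower K Λ U]
    [FiniteDimensional K U] [Nontrivial U] (hU : IsUniserialModule Λ U)
    (U' : Type*) [AddCommGroup U'] [Module K U'] [Module Λ U'] [IsScalarTower K Λ U']
    [FiniteDimensional K U'] [Nontrivial U'] (hU' : IsUniserialModule Λ U')
    (hdim : Module.finrank K U = Module.finrank K U')
    (hniso : IsEmpty (U ≃ₗ[Λ] U'))
    (hquot : Nonempty ((U ⧸ Module.socle Λ U) ≃ₗ[Λ] (U' ⧸ Module.socle Λ U'))) :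
    Module.finrank K (U' →ₗ[Λ] U) =
      Module.finrank K ((U ⧸ Module.socle Λ U) →ₗ[Λ] U) ∧
    Module.finrank K (U' →ₗ[Λ] U) < Module.finrank K (U →ₗ[Λ] U) := by
  obtain ⟨e⟩ := hquot
  set s := Module.socle Λ U with hs
  set s' := Module.socle Λ U' with hs'
  -- every Λ-hom U' → U kills the socle of U'
  have hker : ∀ φ : U' →ₗ[Λ] U, s' ≤ LinearMap.ker φ := by
    intro φ
    by_cases h0 : LinearMap.ker φ = ⊥
    · exfalso
      have hinj : Function.Injective φ := LinearMap.ker_eq_bot.1 h0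
      have hinjK : Function.Injective (φ.restrictScalars K) := hinj
      have hsurjK : Function.Surjective (φ.restrictScalars K) :=
        (LinearMap.injective_iff_surjective_of_finrank_eq_finrank hdim.symm).1 hinjK
      exact hniso.false ((LinearEquiv.ofBijective φ ⟨hinj, hsurjK⟩).symm)
    · exact socle_le_of_ne_bot hU' h0
  -- composition with mkQ, as a K-linear map
  let Ψ' : ((U' ⧸ s') →ₗ[Λ] U) →ₗ[K] (U' →ₗ[Λ] U) :=
    { toFun := fun g => g ∘ₗ s'.mkQ
      map_add' := fun g h => LinearMap.add_comp _ _ _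
      map_smul' := fun k g => LinearMap.smul_comp _ _ _ }
  have hΨ'bij : Function.Bijective Ψ' := by
    constructor
    · intro g h hgh
      ext x
      exact LinearMap.congr_fun hgh x
    · intro φ
      exact ⟨s'.liftQ φ (hker φ), s'.liftQ_mkQ φ (hker φ)⟩
  let e1 : ((U' ⧸ s') →ₗ[Λ] U) ≃ₗ[K] (U' →ₗ[Λ] U) := LinearEquiv.ofBijective Ψ' hΨ'bij
  -- precomposition with e
  let e2 : ((U' ⧸ s') →ₗ[Λ] U) ≃ₗ[K] ((U ⧸ s) →ₗ[Λ] U) :=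
    { toFun := fun g => g ∘ₗ (e : (U ⧸ s) →ₗ[Λ] (U' ⧸ s'))
      map_add' := fun g h => LinearMap.add_comp _ _ _
      map_smul' := fun k g => LinearMap.smul_comp _ _ _
      invFun := fun g => g ∘ₗ (e.symm : (U' ⧸ s') →ₗ[Λ] (U ⧸ s))
      left_inv := fun g => by ext x; simp
      right_inv := fun g => by ext x; simp }
  have heq : Module.finrank K (U' →ₗ[Λ] U) = Module.finrank K ((U ⧸ s) →ₗ[Λ] U) :=
    e1.symm.finrank_eq.trans e2.finrank_eq
  refine ⟨heq, ?_⟩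
  rw [heq]
  -- finite dimensionality of Hom(U, U)
  haveI : FiniteDimensional K (U →ₗ[Λ] U) :=
    FiniteDimensional.of_injective (LinearMap.restrictScalarsₗ (R := K) (S := Λ) (M := U) (N := U) (R₁ := K))
      (LinearMap.restrictScalars_injective K)
  -- embed Hom(U/s, U) into Hom(U, U)
  let Ψ : ((U ⧸ s) →ₗ[Λ] U) →ₗ[K] (U →ₗ[Λ] U) :=
    { toFun := fun g => g ∘ₗ s.mkQ
      map_add' := fun g h => LinearMap.add_comp _ _ _
      map_smul' := fun k g => LinearMap.smul_comp _ _ _ }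
  have hΨinj : Function.Injective Ψ := by
    intro g h hgh
    ext x
    exact LinearMap.congr_fun hgh x
  haveI : FiniteDimensional K ((U ⧸ s) →ₗ[Λ] U) := FiniteDimensional.of_injective Ψ hΨinj
  have hrange : LinearMap.range Ψ ≠ ⊤ := by
    intro htop
    have : (LinearMap.id : U →ₗ[Λ] U) ∈ LinearMap.range Ψ := htop ▸ Submodule.mem_top
    obtain ⟨g, hg⟩ := this
    have hmkQinj : Function.Injective s.mkQ := by
      intro x y hxy
      have := congrArg (fun f : U →ₗ[Λ] U => f x - f y) hg
      simp only [LinearMap.id_coe, id_eq] at this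
      have : g (s.mkQ x) - g (s.mkQ y) = x - y := this
      rw [hxy, sub_self] at this
      exact sub_eq_zero.1 this.symm
    have : s = ⊥ := by
      rw [← Submodule.ker_mkQ s, LinearMap.ker_eq_bot]
      exact hmkQinj
    exact socle_ne_bot K Λ U this
  calc Module.finrank K ((U ⧸ s) →ₗ[Λ] U)
      = Module.finrank K (LinearMap.range Ψ) := (LinearMap.finrank_range_of_inj hΨinj).symm
    _ < Module.finrank K (U →ₗ[Λ] U) := Submodule.finrank_lt hrange
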